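/- Let B = ℂ[x,y,z] be the polynomial ring in three variables and let A = ℂ[x, x²y + z²] be the ℂ-subalgebra generated by x and x²y + z². Then B is faithfully flat as an A-module. -/

import Mathlib

open MvPolynomial

/-- The subalgebra `A = ℂ[x, x²y + z²] ⊆ B = ℂ[x,y,z]` generated by the algebraically
independent elements `x` and `x²y + z²`; it is the kernel of the locally nilpotent
derivation `δ` with `δ(x) = 0`, `δ(y) = −2z`, `δ(z) = x²`. -/
noncomputable def kerSubalgebra18 : Subalgebra ℂ (MvPolynomial (Fin 3) ℂ) :=
  Algebra.adjoin ℂ {X 0, (X 0) ^ 2 * X 1 + (X 2) ^ 2}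

set_option synthInstance.maxHeartbeats 1000000
set_option maxHeartbeats 2000000

noncomputable section Stmt18Aux

namespace Stmt18Aux

abbrev B := MvPolynomial (Fin 3) ℂ

variable (R : Type) [CommRing R] [Algebra ℂ R] [Algebra R B] [IsScalarTower ℂ R B]
variable (u v : R)

/-- The minimal polynomial `Z² + u²·Y - v` of `z` over `R[Y]`. -/
def f : Polynomial (Polynomial R) :=
  Polynomial.X ^ 2 +
    (Polynomial.C (Polynomial.C (u ^ 2) * Polynomial.X) - Polynomial.C (Polynomial.C v))

lemma hf : (f R u v).Monic := by
  have h : (Polynomial.C (Polynomial.C (u ^ 2) * Polynomial.X) -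
      Polynomial.C (Polynomial.C v) : Polynomial (Polynomial R)).degree < (2 : ℕ) := by
    refine lt_of_le_of_lt (Polynomial.degree_sub_le _ _) ?_
    rw [sup_lt_iff]
    constructor <;> exact lt_of_le_of_lt Polynomial.degree_C_le (by norm_num)
  unfold f
  exact Polynomial.monic_X_pow_add (by exact_mod_cast h)

/-- Evaluation `R[Y] → B`, `Y ↦ y`. -/
def g : Polynomial R →+* B := Polynomial.eval₂RingHom (algebraMap R B) (X 1)

lemma g_C (a : R) : g R (Polynomial.C a) = algebraMap R B a := by
  simp [g]

lemma g_X : g R Polynomial.X = X 1 := by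
  simp [g]

variable (hu : algebraMap R B u = X 0)
variable (hv : algebraMap R B v = (X 0) ^ 2 * X 1 + (X 2) ^ 2)

include hu hv in
lemma hroot : (f R u v).eval₂ (g R) (X 2) = 0 := by
  rw [f]
  simp only [Polynomial.eval₂_add, Polynomial.eval₂_sub, Polynomial.eval₂_pow,
    Polynomial.eval₂_X, Polynomial.eval₂_C]
  rw [map_mul]
  simp only [g_C, g_X]
  rw [map_pow, hu, hv]
  ring

/-- The forward map `AdjoinRoot f → B`, sending `Z ↦ z`. -/
def φ : AdjoinRoot (f R u v) →+* B := AdjoinRoot.lift (g R) (X 2) (hroot R u v hu hv)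

lemma phi_of (p : Polynomial R) : φ R u v hu hv (AdjoinRoot.of (f R u v) p) = g R p :=
  AdjoinRoot.lift_of _

lemma phi_root : φ R u v hu hv (AdjoinRoot.root (f R u v)) = X 2 :=
  AdjoinRoot.lift_root _

/-- The backward map `B → AdjoinRoot f`, `x ↦ u`, `y ↦ Y`, `z ↦ Z`. -/
def ψ : B →+* AdjoinRoot (f R u v) :=
  MvPolynomial.eval₂Hom ((AdjoinRoot.of (f R u v)).comp (algebraMap ℂ (Polynomial R)))
    ![AdjoinRoot.of (f R u v) (Polynomial.C u), AdjoinRoot.of (f R u v) Polynomial.X,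
      AdjoinRoot.root (f R u v)]

lemma psi_X0 : ψ R u v (X 0) = AdjoinRoot.of (f R u v) (Polynomial.C u) := by
  simp [ψ]

lemma psi_X1 : ψ R u v (X 1) = AdjoinRoot.of (f R u v) Polynomial.X := by
  simp [ψ]

lemma psi_X2 : ψ R u v (X 2) = AdjoinRoot.root (f R u v) := by
  simp [ψ]

lemma psi_C (r : ℂ) : ψ R u v (MvPolynomial.C r) =
    AdjoinRoot.of (f R u v) (Polynomial.C (algebraMap ℂ R r)) := by
  have h1 : ψ R u v (MvPolynomial.C r) =
      AdjoinRoot.of (f R u v) (algebraMap ℂ (Polynomial R) r) := by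
    simp [ψ]
  rw [h1, IsScalarTower.algebraMap_apply ℂ R (Polynomial R) r, Polynomial.algebraMap_eq]

lemma root_sq : (AdjoinRoot.root (f R u v)) ^ 2 =
    AdjoinRoot.of (f R u v) (Polynomial.C v) -
      AdjoinRoot.of (f R u v) (Polynomial.C (u ^ 2) * Polynomial.X) := by
  have h : Polynomial.eval₂ (AdjoinRoot.of (f R u v)) (AdjoinRoot.root (f R u v))
      (Polynomial.X ^ 2 + (Polynomial.C (Polynomial.C (u ^ 2) * Polynomial.X) -
        Polynomial.C (Polynomial.C v))) = 0 := AdjoinRoot.eval₂_root (f R u v)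
  simp only [Polynomial.eval₂_add, Polynomial.eval₂_sub, Polynomial.eval₂_pow,
    Polynomial.eval₂_X, Polynomial.eval₂_C] at h
  linear_combination h

variable (hinj : Function.Injective (algebraMap R B))
variable (hgen : ∀ a : R, algebraMap R B a ∈
  Algebra.adjoin ℂ ({X 0, (X 0) ^ 2 * X 1 + (X 2) ^ 2} : Set B))

include hu hv hinj hgen in
lemma psi_val (a : R) : ψ R u v (algebraMap R B a) =
    AdjoinRoot.of (f R u v) (Polynomial.C a) := by
  have key : ∀ c ∈ Algebra.adjoin ℂ ({X 0, (X 0) ^ 2 * X 1 + (X 2) ^ 2} : Set B),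
      ∃ a' : R, algebraMap R B a' = c ∧
        ψ R u v c = AdjoinRoot.of (f R u v) (Polynomial.C a') := by
    intro c hc
    induction hc using Algebra.adjoin_induction with
    | mem x hx =>
      rcases hx with h | h
      · exact ⟨u, by rw [hu, h], by rw [h, psi_X0]⟩
      · refine ⟨v, by rw [hv, h], ?_⟩
        rw [h, map_add, map_mul, map_pow, map_pow, psi_X0, psi_X1, psi_X2, root_sq,
          ← map_pow, ← map_mul, ← Polynomial.C_pow]
        ring
    | algebraMap r =>
      refine ⟨algebraMap ℂ R r, by rw [← IsScalarTower.algebraMap_apply], ?_⟩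
      rw [show algebraMap ℂ B r = MvPolynomial.C r from rfl, psi_C]
    | add x y hx hy ihx ihy =>
      obtain ⟨a1, ha1, h1⟩ := ihx
      obtain ⟨a2, ha2, h2⟩ := ihy
      exact ⟨a1 + a2, by rw [map_add, ha1, ha2], by rw [map_add, h1, h2, map_add, ← map_add]⟩
    | mul x y hx hy ihx ihy =>
      obtain ⟨a1, ha1, h1⟩ := ihx
      obtain ⟨a2, ha2, h2⟩ := ihy
      exact ⟨a1 * a2, by rw [map_mul, ha1, ha2], by rw [map_mul, h1, h2, map_mul, ← map_mul]⟩
  obtain ⟨a', ha', h⟩ := key (algebraMap R B a) (hgen a)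
  rwa [hinj ha'] at h

include hu hv hinj hgen in
lemma psi_comp_g : (ψ R u v).comp (g R) = AdjoinRoot.of (f R u v) := by
  apply Polynomial.ringHom_ext
  · intro a
    simp only [RingHom.comp_apply, g_C]
    exact psi_val R u v hu hv hinj hgen a
  · simp only [RingHom.comp_apply, g_X]
    exact psi_X1 R u v

include hinj hgen in
lemma phi_psi : (φ R u v hu hv).comp (ψ R u v) = RingHom.id B := by
  apply MvPolynomial.ringHom_ext
  · intro r
    simp only [RingHom.comp_apply, RingHom.id_apply]
    rw [psi_C, phi_of, g_C, ← IsScalarTower.algebraMap_apply]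
    rfl
  · intro i
    fin_cases i
    · show φ R u v hu hv (ψ R u v (X 0)) = X 0
      rw [psi_X0, phi_of, g_C, hu]
    · show φ R u v hu hv (ψ R u v (X 1)) = X 1
      rw [psi_X1, phi_of, g_X]
    · show φ R u v hu hv (ψ R u v (X 2)) = X 2
      rw [psi_X2, phi_root]

include hinj hgen in
lemma psi_phi : (ψ R u v).comp (φ R u v hu hv) = RingHom.id (AdjoinRoot (f R u v)) := by
  have key : ((ψ R u v).comp (φ R u v hu hv)).comp (AdjoinRoot.mk (f R u v)) =
      (AdjoinRoot.mk (f R u v)) := by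
    apply Polynomial.ringHom_ext
    · intro p
      simp only [RingHom.comp_apply]
      rw [show (AdjoinRoot.mk (f R u v)) (Polynomial.C p) = AdjoinRoot.of (f R u v) p from rfl]
      rw [phi_of]
      exact congrFun (congrArg DFunLike.coe (psi_comp_g R u v hu hv hinj hgen)) p
    · simp only [RingHom.comp_apply]
      rw [show (AdjoinRoot.mk (f R u v)) Polynomial.X = AdjoinRoot.root (f R u v) from rfl]
      rw [phi_root]
      exact psi_X2 R u v
  refine RingHom.ext fun a => ?_
  obtain ⟨p, rfl⟩ := AdjoinRoot.mk_surjective a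
  simpa using congrFun (congrArg DFunLike.coe key) p

/-- `φ` as an `R`-algebra hom. -/
def φA : AdjoinRoot (f R u v) →ₐ[R] B :=
  { φ R u v hu hv with
    commutes' := fun a => by
      show φ R u v hu hv (algebraMap R (AdjoinRoot (f R u v)) a) = algebraMap R B a
      rw [IsScalarTower.algebraMap_apply R (Polynomial R) (AdjoinRoot (f R u v)) a,
        Polynomial.algebraMap_eq, AdjoinRoot.algebraMap_eq, phi_of, g_C] }

include hinj hgen in
lemma phiA_bij : Function.Bijective (φA R u v hu hv) := by
  refine Function.bijective_iff_has_inverse.mpr ⟨ψ R u v, ?_, ?_⟩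
  · intro a
    exact congrFun (congrArg DFunLike.coe (psi_phi R u v hu hv hinj hgen)) a
  · intro b
    exact congrFun (congrArg DFunLike.coe (phi_psi R u v hu hv hinj hgen)) b

include hu hv hinj hgen in
theorem freeAux : Module.Free R B := by
  have h1 : Module.Free R (AdjoinRoot (f R u v)) :=
    Module.Free.of_basis
      ((Polynomial.basisMonomials R).smulTower (AdjoinRoot.powerBasis' (hf R u v)).basis)
  exact Module.Free.of_equiv
    (AlgEquiv.ofBijective (φA R u v hu hv) (phiA_bij R u v hu hv hinj hgen)).toLinearEquiv

end Stmt18Aux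

end Stmt18Aux

/-- `B = ℂ[x,y,z]` is faithfully flat as a module over its subalgebra
`A = ℂ[x, x²y + z²]`. -/
theorem stmt18 :
    Module.FaithfullyFlat ↥kerSubalgebra18 (MvPolynomial (Fin 3) ℂ) := by
  haveI : Module.Free ↥kerSubalgebra18 (MvPolynomial (Fin 3) ℂ) :=
    Stmt18Aux.freeAux ↥kerSubalgebra18
      ⟨X 0, Algebra.subset_adjoin (by simp)⟩
      ⟨(X 0) ^ 2 * X 1 + (X 2) ^ 2, Algebra.subset_adjoin (by simp)⟩
      (by rw [Subalgebra.algebraMap_eq]; rfl)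
      (by rw [Subalgebra.algebraMap_eq]; rfl)
      Subtype.val_injective (fun a => a.2)
  infer_instance
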